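/- For a thermodynamically stable Gaussian spin glass, the disorder-averaged Gibbs expectation of the Hamiltonian per particle satisfies E[Ω(h)] ≤ (1+β)·c̄ for all β ≥ 0, where h = H/|Λ|. -/

import Mathlib

open MeasureTheory ProbabilityTheory

/-- The spin value of a Boolean variable. -/
noncomputable def spin (b : Bool) : ℝ := if b then 1 else -1

/-- The Gaussian Hamiltonian `H(σ) = -∑_X J_X σ_X`. -/
noncomputable def Ham {Λ : Type*} [Fintype Λ] [DecidableEq Λ]
    (J : Finset Λ → ℝ) (s : Λ → Bool) : ℝ :=
  -∑ X : Finset Λ, J X * ∏ i ∈ X, spin (s i)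

/-- The Gibbs expectation at inverse temperature `β`. -/
noncomputable def gibbsExp {Λ : Type*} [Fintype Λ] [DecidableEq Λ]
    (β : ℝ) (H : (Λ → Bool) → ℝ) (f : (Λ → Bool) → ℝ) : ℝ :=
  (∑ s, f s * Real.exp (-β * H s)) / ∑ s, Real.exp (-β * H s)


open Real in

lemma odd_gauss_int {b : ℝ} (hb : 0 < b) :
    ∫ x : ℝ, x * Real.exp (-(b * x ^ 2)) = 0 := by
  have h := integral_neg_eq_self (fun x : ℝ => x * Real.exp (-(b * x ^ 2))) volume
  simp only [neg_mul, neg_sq] at h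
  have h2 : ∫ x : ℝ, -(x * Real.exp (-(b * x ^ 2))) =
      -∫ x : ℝ, x * Real.exp (-(b * x ^ 2)) := integral_neg _
  rw [h2] at h
  linarith [h]

lemma pdf_mul_id_eq (μ : ℝ) (v : NNReal) (x : ℝ) :
    (gaussianPDFReal μ v x).toNNReal • (x : ℝ) =
      (fun y => (√(2 * Real.pi * v))⁻¹ * Real.exp (-((2 * (v:ℝ))⁻¹ * y ^ 2)) * (y + μ)) (x - μ) := by
  rw [NNReal.smul_def, Real.coe_toNNReal _ (gaussianPDFReal_nonneg μ v x), smul_eq_mul]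
  simp only [gaussianPDFReal]
  rw [show -((2 * (v:ℝ))⁻¹ * (x - μ) ^ 2) = -(x - μ) ^ 2 / (2 * (v:ℝ)) by ring]
  ring

lemma phi_int {μ : ℝ} {v : NNReal} (hv : v ≠ 0) :
    Integrable (fun y : ℝ => (√(2 * Real.pi * v))⁻¹ * Real.exp (-((2 * (v:ℝ))⁻¹ * y ^ 2)) * (y + μ)) := by
  have hb : (0:ℝ) < (2 * (v:ℝ))⁻¹ := by positivity
  have h1 : Integrable (fun y : ℝ => y * Real.exp (-((2 * (v:ℝ))⁻¹ * y ^ 2))) := by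
    simpa [neg_mul] using integrable_mul_exp_neg_mul_sq hb
  have h2 : Integrable (fun y : ℝ => Real.exp (-((2 * (v:ℝ))⁻¹ * y ^ 2))) := by
    simpa [neg_mul] using integrable_exp_neg_mul_sq hb
  have : (fun y : ℝ => (√(2 * Real.pi * v))⁻¹ * Real.exp (-((2 * (v:ℝ))⁻¹ * y ^ 2)) * (y + μ)) =
      (fun y : ℝ => (√(2 * Real.pi * v))⁻¹ * (y * Real.exp (-((2 * (v:ℝ))⁻¹ * y ^ 2)))
        + μ * ((√(2 * Real.pi * v))⁻¹ * Real.exp (-((2 * (v:ℝ))⁻¹ * y ^ 2)))) := by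
    funext y; ring
  rw [this]
  exact (h1.const_mul _).add ((h2.const_mul _).const_mul μ)

lemma integrable_id_gauss (μ : ℝ) (v : NNReal) : Integrable id (gaussianReal μ v) := by
  by_cases hv : v = 0
  · subst hv
    rw [gaussianReal_zero_var]
    have h : (id : ℝ → ℝ) =ᵐ[Measure.dirac μ] fun _ => μ := by
      rw [MeasureTheory.ae_dirac_eq]
      exact Filter.eventually_pure.2 rfl
    exact (integrable_const μ).congr h.symm
  · rw [gaussianReal_of_var_ne_zero μ hv]
    have hmeas : Measurable fun x => (gaussianPDFReal μ v x).toNNReal :=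
      (measurable_gaussianPDFReal μ v).real_toNNReal
    have hpdf : gaussianPDF μ v = fun x => ((gaussianPDFReal μ v x).toNNReal : ENNReal) := by
      funext x; rfl
    rw [hpdf, integrable_withDensity_iff_integrable_smul hmeas]
    have heq : (fun x => (gaussianPDFReal μ v x).toNNReal • (id x : ℝ)) = fun x =>
        (fun y => (√(2 * Real.pi * v))⁻¹ * Real.exp (-((2 * (v:ℝ))⁻¹ * y ^ 2)) * (y + μ)) (x - μ) := by
      funext x; exact pdf_mul_id_eq μ v x
    rw [heq]
    exact (phi_int hv).comp_sub_right μ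

lemma integral_id_gauss (μ : ℝ) (v : NNReal) : ∫ x, x ∂(gaussianReal μ v) = μ := by
  by_cases hv : v = 0
  · subst hv; rw [gaussianReal_zero_var, integral_dirac]
  · rw [gaussianReal_of_var_ne_zero μ hv]
    have hb : (0:ℝ) < (2 * (v:ℝ))⁻¹ := by positivity
    have hmeas : Measurable fun x => (gaussianPDFReal μ v x).toNNReal :=
      (measurable_gaussianPDFReal μ v).real_toNNReal
    have hpdf : gaussianPDF μ v = fun x => ((gaussianPDFReal μ v x).toNNReal : ENNReal) := by
      funext x; rfl
    rw [hpdf, integral_withDensity_eq_integral_smul hmeas]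
    have heq : (fun x => (gaussianPDFReal μ v x).toNNReal • (x : ℝ)) = fun x =>
        (fun y => (√(2 * Real.pi * v))⁻¹ * Real.exp (-((2 * (v:ℝ))⁻¹ * y ^ 2)) * (y + μ)) (x - μ) := by
      funext x; exact pdf_mul_id_eq μ v x
    rw [heq, integral_sub_right_eq_self (μ := volume)
      (fun y => (√(2 * Real.pi * v))⁻¹ * Real.exp (-((2 * (v:ℝ))⁻¹ * y ^ 2)) * (y + μ)) μ]
    have h1 : Integrable (fun y : ℝ => y * Real.exp (-((2 * (v:ℝ))⁻¹ * y ^ 2))) := by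
      simpa [neg_mul] using integrable_mul_exp_neg_mul_sq hb
    have h2 : Integrable (fun y : ℝ => Real.exp (-((2 * (v:ℝ))⁻¹ * y ^ 2))) := by
      simpa [neg_mul] using integrable_exp_neg_mul_sq hb
    have hsplit : (fun y : ℝ => (√(2 * Real.pi * v))⁻¹ * Real.exp (-((2 * (v:ℝ))⁻¹ * y ^ 2)) * (y + μ)) =
        (fun y : ℝ => (√(2 * Real.pi * v))⁻¹ * (y * Real.exp (-((2 * (v:ℝ))⁻¹ * y ^ 2)))
          + μ * ((√(2 * Real.pi * v))⁻¹ * Real.exp (-((2 * (v:ℝ))⁻¹ * y ^ 2)))) := by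
      funext y; ring
    rw [hsplit, integral_add (h1.const_mul _) ((h2.const_mul _).const_mul μ),
      integral_const_mul, integral_const_mul, odd_gauss_int hb]
    have hone : ∫ y : ℝ, (√(2 * Real.pi * v))⁻¹ * Real.exp (-((2 * (v:ℝ))⁻¹ * y ^ 2)) = 1 := by
      have h := integral_gaussianPDFReal_eq_one μ hv
      rw [show gaussianPDFReal μ v = fun x => (fun y : ℝ =>
          (√(2 * Real.pi * v))⁻¹ * Real.exp (-((2 * (v:ℝ))⁻¹ * y ^ 2))) (x - μ) by
        funext x
        simp only [gaussianPDFReal]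
        rw [show -((2 * (v:ℝ))⁻¹ * (x - μ) ^ 2) = -(x - μ) ^ 2 / (2 * (v:ℝ)) by ring],
        integral_sub_right_eq_self (μ := volume)
          (fun y => (√(2 * Real.pi * v))⁻¹ * Real.exp (-((2 * (v:ℝ))⁻¹ * y ^ 2))) μ] at h
      exact h
    rw [hone]
    ring

open Real in
lemma sum_spin_prod {Λ : Type*} [Fintype Λ] [DecidableEq Λ] (X : Finset Λ) :
    ∑ s : Λ → Bool, ∏ i ∈ X, spin (s i) =
      if X = ∅ then (Fintype.card (Λ → Bool) : ℝ) else 0 := by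
  have key : ∑ s : Λ → Bool, ∏ i ∈ X, spin (s i) =
      ∏ i : Λ, (if i ∈ X then (0:ℝ) else 2) := by
    have h1 : ∀ s : Λ → Bool, ∏ i ∈ X, spin (s i) =
        ∏ i : Λ, (if i ∈ X then spin (s i) else 1) := by
      intro s
      rw [Finset.prod_ite_mem, Finset.univ_inter]
    simp_rw [h1]
    rw [← Fintype.piFinset_univ, ← Finset.prod_univ_sum (fun _ => (Finset.univ : Finset Bool)) (fun i b => if i ∈ X then spin b else 1)]
    congr 1
    funext i
    by_cases hi : i ∈ X <;> simp [hi, spin]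
  rw [key]
  by_cases hX : X = ∅
  · simp [hX, Fintype.card_fun]
  · rw [if_neg hX]
    obtain ⟨i, hi⟩ := Finset.nonempty_iff_ne_empty.mpr hX
    exact Finset.prod_eq_zero (Finset.mem_univ i) (if_pos hi)

lemma sum_Ham {Λ : Type*} [Fintype Λ] [DecidableEq Λ] (J : Finset Λ → ℝ) :
    ∑ s : Λ → Bool, Ham J s = -(Fintype.card (Λ → Bool) : ℝ) * J ∅ := by
  simp only [Ham, Finset.sum_neg_distrib]
  rw [Finset.sum_comm]
  simp_rw [← Finset.mul_sum, sum_spin_prod]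
  simp [Finset.sum_ite_eq']
  ring

lemma gibbs_le {Λ : Type*} [Fintype Λ] [DecidableEq Λ] [Nonempty Λ]
    (K : Finset Λ → ℝ) {β : ℝ} (hβ : 0 ≤ β) :
    gibbsExp β (Ham K) (fun s => Ham K s / (Fintype.card Λ)) ≤ -K ∅ / (Fintype.card Λ) := by
  set H := Ham K
  set E : (Λ → Bool) → ℝ := fun s => Real.exp (-β * H s) with hE
  have hNc : (0:ℝ) < (Fintype.card (Λ → Bool) : ℝ) := by
    exact_mod_cast Fintype.card_pos
  have hn : (0:ℝ) < (Fintype.card Λ : ℝ) := by exact_mod_cast Fintype.card_pos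
  have hZ : (0:ℝ) < ∑ s, E s :=
    Finset.sum_pos (fun s _ => Real.exp_pos _) Finset.univ_nonempty
  have hanti : Antivary H E := by
    intro i j h
    by_contra hc
    push_neg at hc
    have : -β * H j ≤ -β * H i := by nlinarith
    exact absurd h (not_lt.mpr (Real.exp_le_exp.mpr this))
  have hcheb := (hanti.antivaryOn (↑(Finset.univ : Finset (Λ → Bool)))).card_mul_sum_le_sum_mul_sum
  rw [Finset.card_univ] at hcheb
  have hsum : ∑ s, H s = -(Fintype.card (Λ → Bool) : ℝ) * K ∅ := sum_Ham K
  have h1 : (∑ s, H s * E s) / (∑ s, E s) ≤ -K ∅ := by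
    rw [div_le_iff₀ hZ]
    rw [hsum] at hcheb
    nlinarith
  have h2 : gibbsExp β H (fun s => H s / (Fintype.card Λ)) =
      ((∑ s, H s * E s) / (∑ s, E s)) / (Fintype.card Λ) := by
    have hnum : ∑ x : Λ → Bool, H x / (Fintype.card Λ : ℝ) * E x =
        (∑ x : Λ → Bool, H x * E x) / (Fintype.card Λ : ℝ) := by
      rw [Finset.sum_div]
      exact Finset.sum_congr rfl fun s _ => by ring
    simp only [gibbsExp, ← hE]
    rw [hnum, div_div, div_div, mul_comm]
  rw [h2]
  exact div_le_div_of_nonneg_right h1 hn.le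

/-- main -/
theorem quenched_energy_bound
    {Λ : Type*} [Fintype Λ] [DecidableEq Λ] [Nonempty Λ]
    {Ω : Type*} [MeasureSpace Ω] [IsProbabilityMeasure (ℙ : Measure Ω)]
    (J : Finset Λ → Ω → ℝ) (μA : Finset Λ → ℝ) (Δsq : Finset Λ → NNReal)
    (hindep : iIndepFun J ℙ)
    (hdist : ∀ X, (ℙ : Measure Ω).map (J X) = gaussianReal (μA X) (Δsq X))
    (cbar : ℝ)
    (hμstab : ∑ X : Finset Λ, |μA X| ≤ cbar * (Fintype.card Λ))
    (hΔstab : ∑ X : Finset Λ, (Δsq X : ℝ) ≤ cbar * (Fintype.card Λ))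
    (β : ℝ) (hβ : 0 ≤ β) :
    (∫ ω, gibbsExp β (Ham (fun X => J X ω))
        (fun s => Ham (fun X => J X ω) s / (Fintype.card Λ)))
      ≤ (1 + β) * cbar := by
  have hn : (0:ℝ) < (Fintype.card Λ : ℝ) := by exact_mod_cast Fintype.card_pos
  have hcbar : (0:ℝ) ≤ cbar := by
    have h0 : (0:ℝ) ≤ ∑ X : Finset Λ, |μA X| :=
      Finset.sum_nonneg fun X _ => abs_nonneg _
    nlinarith
  have hfinal : (0:ℝ) ≤ (1 + β) * cbar := by nlinarith
  by_cases hf : Integrable (fun ω => gibbsExp β (Ham (fun X => J X ω))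
      (fun s => Ham (fun X => J X ω) s / (Fintype.card Λ))) ℙ
  · -- integrable case
    have hAE : AEMeasurable (J ∅) ℙ :=
      aemeasurable_of_map_neZero (by rw [hdist ∅]; infer_instance)
    have hid : Integrable id (gaussianReal (μA ∅) (Δsq ∅)) := integrable_id_gauss _ _
    have hJint : Integrable (J ∅) ℙ := by
      have h1 : Integrable id ((ℙ : Measure Ω).map (J ∅)) := by rw [hdist ∅]; exact hid
      have := (integrable_map_measure
        (by rw [hdist ∅]; exact hid.aestronglyMeasurable) hAE).mp h1
      exact this
    have hJmean : ∫ ω, J ∅ ω = μA ∅ := by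
      have h1 : ∫ x, id x ∂((ℙ : Measure Ω).map (J ∅)) = ∫ ω, id (J ∅ ω) :=
        integral_map hAE (by rw [hdist ∅]; exact hid.aestronglyMeasurable)
      simp only [id] at h1
      rw [← h1, hdist ∅]
      exact integral_id_gauss _ _
    have hgint : Integrable (fun ω => -J ∅ ω / (Fintype.card Λ : ℝ)) ℙ :=
      hJint.neg.div_const _
    have hmono : ∀ ω, gibbsExp β (Ham (fun X => J X ω))
        (fun s => Ham (fun X => J X ω) s / (Fintype.card Λ))
          ≤ -J ∅ ω / (Fintype.card Λ : ℝ) := fun ω => gibbs_le (fun X => J X ω) hβ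
    have hle := integral_mono hf hgint hmono
    have hg : ∫ ω, -J ∅ ω / (Fintype.card Λ : ℝ) = -μA ∅ / (Fintype.card Λ : ℝ) := by
      rw [integral_div, integral_neg, hJmean]
    rw [hg] at hle
    refine hle.trans ?_
    have habs : |μA ∅| ≤ cbar * (Fintype.card Λ : ℝ) := by
      refine le_trans ?_ hμstab
      exact Finset.single_le_sum (fun X _ => abs_nonneg (μA X)) (Finset.mem_univ ∅)
    have h2 : -μA ∅ ≤ cbar * (Fintype.card Λ : ℝ) := (neg_le_abs _).trans habs
    rw [div_le_iff₀ hn]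
    nlinarith [mul_nonneg (mul_nonneg hβ hcbar) hn.le]
  · rw [integral_undef hf]
    exact hfinal
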